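/- Let S ∈ ℝ^N and k ∈ {1, …, N}. If there exist 0 ≤ t₀ < t₁ such that Φ_k(t) = 0 for all t ∈ (t₀, t₁), then ⟨S, v^n⟩ v^n_k = 0 for all n = 1, …, N (and hence Φ_k is identically zero on ℝ). -/

import Mathlib

open Matrix Set

/-- `Φ_k(t) = ⟨S, v¹⟩ t v¹_k + Σ_{n=2}^N (⟨S, vⁿ⟩/ω_n) sin(ω_n t) vⁿ_k`. -/
noncomputable def Phi {N : ℕ} (hN : 2 ≤ N) (ω : Fin N → ℝ) (v : Fin N → Fin N → ℝ)
    (S : Fin N → ℝ) (k : Fin N) (t : ℝ) : ℝ :=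
  (S ⬝ᵥ v ⟨0, by omega⟩) * t * v ⟨0, by omega⟩ k
    + ∑ n ∈ Finset.univ.filter (fun n : Fin N => n ≠ ⟨0, by omega⟩),
        (S ⬝ᵥ v n) / ω n * Real.sin (ω n * t) * v n k

lemma aux_sin_shift_odd (θ : ℝ) (j : ℕ) :
    Real.sin (θ + ((2 * j + 1 : ℕ) : ℝ) * (Real.pi / 2)) = (-1) ^ j * Real.cos θ := by
  have h : ((2 * j + 1 : ℕ) : ℝ) * (Real.pi / 2) = Real.pi / 2 + (j : ℝ) * Real.pi := by
    push_cast; ring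
  rw [h, ← add_assoc, Real.sin_add_nat_mul_pi, Real.sin_add_pi_div_two]

lemma aux_sin_shift_even (θ : ℝ) (j : ℕ) :
    Real.sin (θ + ((2 * j : ℕ) : ℝ) * (Real.pi / 2)) = (-1) ^ j * Real.sin θ := by
  have h : ((2 * j : ℕ) : ℝ) * (Real.pi / 2) = (j : ℝ) * Real.pi := by push_cast; ring
  rw [h, Real.sin_add_nat_mul_pi]

lemma aux_hasDerivAt_term (A B ω : ℝ) (m : ℕ) (t : ℝ) :
    HasDerivAt (fun t => A * (ω ^ m * Real.sin (ω * t + (m : ℝ) * (Real.pi / 2))) * B)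
      (A * (ω ^ (m + 1) * Real.sin (ω * t + ((m + 1 : ℕ) : ℝ) * (Real.pi / 2))) * B) t := by
  have h1 : HasDerivAt (fun t : ℝ => ω * t + (m : ℝ) * (Real.pi / 2)) ω t := by
    simpa using ((hasDerivAt_id t).const_mul ω).add_const ((m : ℝ) * (Real.pi / 2))
  have h2 := (Real.hasDerivAt_sin (ω * t + (m : ℝ) * (Real.pi / 2))).comp t h1
  have h3 := ((h2.const_mul (ω ^ m)).const_mul A).mul_const B
  refine h3.congr_deriv ?_
  rw [show ((m + 1 : ℕ) : ℝ) * (Real.pi / 2)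
      = (m : ℝ) * (Real.pi / 2) + Real.pi / 2 by push_cast; ring]
  rw [show ω * t + ((m : ℝ) * (Real.pi / 2) + Real.pi / 2)
      = (ω * t + (m : ℝ) * (Real.pi / 2)) + Real.pi / 2 by ring]
  rw [Real.sin_add_pi_div_two]
  ring

/-- If `Φ_k` vanishes on some nonempty interval `(t₀, t₁) ⊆ [0, ∞)`, then all its coefficients
`⟨S, vⁿ⟩ vⁿ_k` vanish, and hence `Φ_k ≡ 0` on `ℝ`. -/
theorem Phi_vanishing_interval
    {N : ℕ} (hN : 2 ≤ N)
    (Δ : Matrix (Fin N) (Fin N) ℝ) (hsymm : Δ.IsSymm)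
    (ω : Fin N → ℝ) (v : Fin N → Fin N → ℝ)
    (hω0 : ω ⟨0, by omega⟩ = 0) (hωmono : StrictMono ω)
    (horth : ∀ n m : Fin N, v n ⬝ᵥ v m = if n = m then 1 else 0)
    (heig : ∀ n : Fin N, Δ.mulVec (v n) = (-(ω n) ^ 2) • v n)
    (S : Fin N → ℝ) (k : Fin N)
    (t₀ t₁ : ℝ) (ht₀ : 0 ≤ t₀) (ht : t₀ < t₁)
    (hvanish : ∀ t ∈ Ioo t₀ t₁, Phi hN ω v S k t = 0) :
    (∀ n : Fin N, (S ⬝ᵥ v n) * v n k = 0) ∧ ∀ t : ℝ, Phi hN ω v S k t = 0 := by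
  have hNpos : 0 < N := by omega
  set z : Fin N := ⟨0, by omega⟩ with hz
  -- positivity of ω away from z
  have hωpos : ∀ n : Fin N, n ≠ z → 0 < ω n := by
    intro n hn
    have hzn : z < n := by
      have hpos : 0 < n.val := Nat.pos_of_ne_zero (fun h0 => hn (Fin.ext h0))
      exact Fin.lt_def.mpr (by simpa [hz] using hpos)
    rw [← hω0]
    exact hωmono hzn
  have hωne : ∀ n : Fin N, n ≠ z → ω n ≠ 0 := fun n hn => ne_of_gt (hωpos n hn)
  have hωnonneg : ∀ n : Fin N, 0 ≤ ω n := by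
    intro n
    rcases eq_or_ne n z with rfl | hn
    · rw [hω0]
    · exact (hωpos n hn).le
  -- injectivity of n ↦ -(ω n)^2
  have hxinj : Function.Injective (fun n : Fin N => -(ω n) ^ 2) := by
    intro m n h
    simp only [neg_inj] at h
    have : ω m = ω n := by
      nlinarith [hωnonneg m, hωnonneg n]
    exact hωmono.injective this
  -- the family of derivatives
  set F : ℕ → ℝ → ℝ := fun m t =>
    (S ⬝ᵥ v z) * (if m = 0 then t else if m = 1 then 1 else 0) * v z k
      + ∑ n ∈ Finset.univ.filter (fun n : Fin N => n ≠ z),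
          (S ⬝ᵥ v n) / ω n * (ω n ^ m * Real.sin (ω n * t + (m : ℝ) * (Real.pi / 2))) * v n k
    with hF
  have hF0 : Phi hN ω v S k = F 0 := by
    funext t
    simp [Phi, hF, hz]
  have hder : ∀ m t, HasDerivAt (F m) (F (m + 1) t) t := by
    intro m t
    apply HasDerivAt.add
    · rcases m with _ | _ | m
      · simpa using ((hasDerivAt_id t).const_mul (S ⬝ᵥ v z)).mul_const (v z k)
      · simpa using (hasDerivAt_const t ((S ⬝ᵥ v z) * (1 : ℝ) * v z k))
      · simpa using (hasDerivAt_const t ((S ⬝ᵥ v z) * (0 : ℝ) * v z k))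
    · exact HasDerivAt.fun_sum fun n _ => aux_hasDerivAt_term _ _ _ m t
  have hiter : ∀ m, iteratedDeriv m (Phi hN ω v S k) = F m := by
    intro m
    induction m with
    | zero => simpa using hF0
    | succ m ih =>
      rw [iteratedDeriv_succ, ih]
      exact funext fun t => (hder m t).deriv
  -- all derivatives vanish at the midpoint τ
  set τ : ℝ := (t₀ + t₁) / 2 with hτdef
  have hτ : τ ∈ Ioo t₀ t₁ := ⟨by simp [hτdef]; linarith, by simp [hτdef]; linarith⟩
  have hzeroiter : ∀ m : ℕ, iteratedDeriv m (fun _ : ℝ => (0 : ℝ)) = fun _ => 0 := by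
    intro m
    induction m with
    | zero => simp
    | succ m ih => rw [iteratedDeriv_succ, ih]; funext x; simp
  have hFzero : ∀ m, F m τ = 0 := by
    intro m
    have hev : Phi hN ω v S k =ᶠ[nhds τ] (fun _ => 0) :=
      Filter.eventuallyEq_of_mem (isOpen_Ioo.mem_nhds hτ) hvanish
    have := hev.iteratedDeriv_eq m
    rw [hiter m, hzeroiter m] at this
    exact this
  -- odd-order derivative identities
  set c : Fin N → ℝ := fun n => (S ⬝ᵥ v n) * v n k with hc
  set bodd : Fin N → ℝ := fun n =>
    if n = z then c z else c n * Real.cos (ω n * τ) with hbodd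
  set beven : Fin N → ℝ := fun n =>
    if n = z then c z * τ else (S ⬝ᵥ v n) / ω n * v n k * Real.sin (ω n * τ) with hbeven
  have hsum_split : ∀ (g : Fin N → ℝ),
      ∑ n : Fin N, g n = g z + ∑ n ∈ Finset.univ.filter (fun n : Fin N => n ≠ z), g n := by
    intro g
    rw [Finset.filter_ne', Finset.add_sum_erase _ g (Finset.mem_univ z)]
  have hoddsum : ∀ i : ℕ, ∑ n : Fin N, bodd n * (-(ω n) ^ 2) ^ i = 0 := by
    intro i
    rw [hsum_split]
    have h1 : bodd z * (-(ω z) ^ 2) ^ i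
        = (S ⬝ᵥ v z) * (if 2 * i + 1 = 0 then τ else if 2 * i + 1 = 1 then 1 else 0) * v z k := by
      simp only [hbodd, hc, if_pos rfl, hω0]
      rw [show (-(0:ℝ) ^ 2) = 0 by norm_num, zero_pow_eq,
        if_neg (by omega : ¬ 2 * i + 1 = 0)]
      rcases eq_or_ne i 0 with rfl | hi
      · rw [if_pos rfl, if_pos (by omega)]; ring
      · rw [if_neg hi, if_neg (by omega)]; ring
    have h2 : ∀ n ∈ Finset.univ.filter (fun n : Fin N => n ≠ z),
        bodd n * (-(ω n) ^ 2) ^ i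
          = (S ⬝ᵥ v n) / ω n
              * (ω n ^ (2 * i + 1) * Real.sin (ω n * τ + ((2 * i + 1 : ℕ) : ℝ) * (Real.pi / 2)))
              * v n k := by
      intro n hn
      rw [Finset.mem_filter] at hn
      simp only [hbodd, hc, if_neg hn.2]
      rw [aux_sin_shift_odd]
      have hne := hωne n hn.2
      have hpow : (-(ω n) ^ 2) ^ i = (-1 : ℝ) ^ i * ω n ^ (2 * i) := by
        rw [show -(ω n) ^ 2 = (-1) * (ω n) ^ 2 by ring, mul_pow, ← pow_mul]
      rw [hpow, pow_succ]
      field_simp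
    rw [Finset.sum_congr rfl h2, h1]
    exact hFzero (2 * i + 1)
  have hevensum : ∀ i : ℕ, ∑ n : Fin N, beven n * (-(ω n) ^ 2) ^ i = 0 := by
    intro i
    rw [hsum_split]
    have h1 : beven z * (-(ω z) ^ 2) ^ i
        = (S ⬝ᵥ v z) * (if 2 * i = 0 then τ else if 2 * i = 1 then 1 else 0) * v z k := by
      simp only [hbeven, hc, if_pos rfl, hω0]
      rw [show (-(0:ℝ) ^ 2) = 0 by norm_num, zero_pow_eq,
        if_neg (by omega : ¬ 2 * i = 1)]
      rcases eq_or_ne i 0 with rfl | hi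
      · rw [if_pos rfl, if_pos (by omega)]; ring
      · rw [if_neg hi, if_neg (by omega)]; ring
    have h2 : ∀ n ∈ Finset.univ.filter (fun n : Fin N => n ≠ z),
        beven n * (-(ω n) ^ 2) ^ i
          = (S ⬝ᵥ v n) / ω n
              * (ω n ^ (2 * i) * Real.sin (ω n * τ + ((2 * i : ℕ) : ℝ) * (Real.pi / 2)))
              * v n k := by
      intro n hn
      rw [Finset.mem_filter] at hn
      simp only [hbeven, if_neg hn.2]
      rw [aux_sin_shift_even]
      have hpow : (-(ω n) ^ 2) ^ i = (-1 : ℝ) ^ i * ω n ^ (2 * i) := by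
        rw [show -(ω n) ^ 2 = (-1) * (ω n) ^ 2 by ring, mul_pow, ← pow_mul]
      rw [hpow]
      ring
    rw [Finset.sum_congr rfl h2, h1]
    exact hFzero (2 * i)
  -- Vandermonde: both coefficient vectors vanish
  have hboddzero : bodd = 0 :=
    Matrix.eq_zero_of_forall_pow_sum_mul_pow_eq_zero hxinj (fun i => hoddsum i)
  have hbevenzero : beven = 0 :=
    Matrix.eq_zero_of_forall_pow_sum_mul_pow_eq_zero hxinj (fun i => hevensum i)
  have hczero : ∀ n : Fin N, c n = 0 := by
    intro n
    rcases eq_or_ne n z with rfl | hn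
    · have h := congrFun hboddzero z
      simp only [hbodd, if_pos rfl, Pi.zero_apply] at h
      exact h
    · have hcos : c n * Real.cos (ω n * τ) = 0 := by
        have h := congrFun hboddzero n
        simp only [hbodd, if_neg hn, Pi.zero_apply] at h
        exact h
      have hsin : c n * Real.sin (ω n * τ) = 0 := by
        have h := congrFun hbevenzero n
        simp only [hbeven, if_neg hn, Pi.zero_apply] at h
        have hne := hωne n hn
        have key : ω n * ((S ⬝ᵥ v n) / ω n * v n k * Real.sin (ω n * τ))
            = c n * Real.sin (ω n * τ) := by
          simp only [hc]; field_simp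
        rw [← key, h, mul_zero]
      linear_combination Real.sin (ω n * τ) * hsin + Real.cos (ω n * τ) * hcos
        - c n * Real.sin_sq_add_cos_sq (ω n * τ)
  constructor
  · exact hczero
  · intro t
    show (S ⬝ᵥ v z) * t * v z k
        + ∑ n ∈ Finset.univ.filter (fun n : Fin N => n ≠ z),
            (S ⬝ᵥ v n) / ω n * Real.sin (ω n * t) * v n k = 0
    have h0 : (S ⬝ᵥ v z) * t * v z k = c z * t := by simp only [hc]; ring
    rw [h0, hczero z, zero_mul, zero_add]
    apply Finset.sum_eq_zero
    intro n hn
    rw [Finset.mem_filter] at hn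
    have h1 : (S ⬝ᵥ v n) / ω n * Real.sin (ω n * t) * v n k
        = (S ⬝ᵥ v n * v n k) * Real.sin (ω n * t) / ω n := by ring
    have h2 : S ⬝ᵥ v n * v n k = 0 := by simpa [hc] using hczero n
    rw [h1, h2, zero_mul, zero_div]
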